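/- For words over an alphabet containing distinct letters $ and #, and words w, u, v not containing $ or #: if $u#$v# belongs to the shuffle ($w#) ⧢ ($w#), then u = w and v = w. -/

import Mathlib

/-- `Shuffle u v w` means `w` is an interleaving (shuffle) of `u` and `v`. -/
inductive Shuffle {α : Type*} : List α → List α → List α → Prop
  | nil : Shuffle [] [] []
  | left {a : α} {u v w : List α} : Shuffle u v w → Shuffle (a :: u) v (a :: w)
  | right {a : α} {u v w : List α} : Shuffle u v w → Shuffle u (a :: v) (a :: w)

lemma shuffle_symm {α : Type*} : ∀ {x y z : List α}, Shuffle x y z → Shuffle y x z := by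
  intro x y z h
  induction h with
  | nil => exact Shuffle.nil
  | left _ ih => exact Shuffle.right ih
  | right _ ih => exact Shuffle.left ih

lemma shuffle_nil_left {α : Type*} : ∀ {x y z : List α}, Shuffle x y z → x = [] → z = y := by
  intro x y z h
  induction h with
  | nil => simp
  | left _ _ => intro hx; simp at hx
  | right _ ih => intro hx; simp [ih hx]

lemma shuffle_split {α : Type*} {d : α} :
    ∀ {x y2 z : List α}, Shuffle x y2 z → ∀ y p q, y2 = d :: y → d ∉ x →
      z = p ++ d :: q → d ∉ p → ∃ x2, x = p ++ x2 ∧ Shuffle x2 y q := by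
  intro x y2 z h
  induction h with
  | nil =>
      intro y p q hy hx hz hp
      exact absurd hz (by simp)
  | @left a u v w h ih =>
      intro y p q hy hx hz hp
      cases p with
      | nil =>
          simp only [List.nil_append, List.cons.injEq] at hz
          exact absurd (hz.1 ▸ (show a ∈ a :: u from List.mem_cons_self)) hx
      | cons b p' =>
          simp only [List.cons_append, List.cons.injEq] at hz
          have hdx' : d ∉ u := fun hm => hx (List.mem_cons_of_mem a hm)
          have hdp' : d ∉ p' := fun hm => hp (List.mem_cons_of_mem b hm)
          obtain ⟨x2, hx2, hsh⟩ := ih y p' q hy hdx' hz.2 hdp'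
          exact ⟨x2, by simp [hz.1, hx2], hsh⟩
  | @right a u v w h ih =>
      intro y p q hy hx hz hp
      obtain ⟨rfl, rfl⟩ := List.cons.inj hy
      cases p with
      | nil =>
          simp only [List.nil_append, List.cons.injEq] at hz
          exact ⟨u, by simp, hz.2 ▸ h⟩
      | cons b p' =>
          simp only [List.cons_append, List.cons.injEq] at hz
          exact (hp (by rw [hz.1]; exact List.mem_cons_self)).elim

lemma key {α : Type*} (d s : α) (w u v : List α) (hds : d ≠ s)
    (hdw : d ∉ w) (hsw : s ∉ w) (hdu : d ∉ u) (hsu : s ∉ u)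
    (h : Shuffle (w ++ [s]) (d :: (w ++ [s])) ((u ++ [s]) ++ d :: (v ++ [s]))) :
    u = w ∧ v = w := by
  have hdx : d ∉ w ++ [s] := by simp [hdw, hds]
  have hdp : d ∉ u ++ [s] := by simp [hdu, hds]
  obtain ⟨x2, hx2, hsh⟩ := shuffle_split h (w ++ [s]) (u ++ [s]) (v ++ [s]) rfl hdx rfl hdp
  rcases List.eq_nil_or_concat x2 with rfl | ⟨x2', a, rfl⟩
  · simp only [List.append_nil] at hx2
    have huw : w = u := by
      have := List.append_inj' hx2 rfl
      exact this.1
    have : Shuffle ([] : List α) (w ++ [s]) (v ++ [s]) := hsh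
    have hvw : v ++ [s] = w ++ [s] := shuffle_nil_left this rfl
    exact ⟨huw.symm, (List.append_inj' hvw rfl).1⟩
  · exfalso
    rw [List.concat_eq_append, ← List.append_assoc] at hx2
    have := List.append_inj' hx2 rfl
    have hsw' : s ∈ w := by
      rw [this.1]
      exact List.mem_append_left _ (List.mem_append_right _ (by simp))
    exact hsw hsw'

/-- If `$u#$v#` is in the shuffle `($w#) ⧢ ($w#)`, where the distinct markers `$`, `#`
do not occur in `w`, `u`, `v`, then `u = w` and `v = w`. -/
theorem stmt_8 {α : Type*} (d s : α) (w u v : List α) (hds : d ≠ s)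
    (hdw : d ∉ w) (hsw : s ∉ w) (hdu : d ∉ u) (hsu : s ∉ u) (hdv : d ∉ v) (hsv : s ∉ v)
    (h : Shuffle (d :: (w ++ [s])) (d :: (w ++ [s]))
        ((d :: (u ++ [s])) ++ (d :: (v ++ [s])))) :
    u = w ∧ v = w := by
  rw [List.cons_append] at h
  cases h with
  | left h => exact key d s w u v hds hdw hsw hdu hsu h
  | right h => exact key d s w u v hds hdw hsw hdu hsu (shuffle_symm h)
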